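/- Let G = (X, W) be a simple game on a finite set X with |X| = n that is both proper and strong, and let F be an admissible rescaling satisfying F(n,k) − F(n,k+1) = F(n,n−k) − F(n,n+1−k) for all 0 ≤ k ≤ n. Then Q*_F(G) = 1/2, where Q*_F(G) = Σ_{k=0}^{n} f(n,k) |W_k| and f(n,k) = (F(n,k) − F(n,k+1)) / C(n,k). -/

import Mathlib

/-- `F : ℕ × ℕ → ℝ` (curried) is an admissible rescaling: `F n k` is nonincreasing in `k`
for each fixed `n`, `F n 0 = 1`, and `F n k = 0` whenever `k > n`. -/
def Admissible (F : ℕ → ℕ → ℝ) : Prop :=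
  (∀ n, Antitone (F n)) ∧ (∀ n, F n 0 = 1) ∧ (∀ n k, n < k → F n k = 0)

/-- The weight function `f(n,k) = (F(n,k) − F(n,k+1)) / C(n,k)` associated to `F`. -/
noncomputable def fwt (F : ℕ → ℕ → ℝ) (n k : ℕ) : ℝ :=
  (F n k - F n (k + 1)) / (n.choose k : ℝ)

/-- The decisiveness index `Q*_F(G) = ∑_{k=0}^{n} f(n,k) |W_k|` of a simple game with
winning coalitions `W` on an `n`-element set. -/
noncomputable def QstarF {X : Type*} [DecidableEq X] (F : ℕ → ℕ → ℝ) (n : ℕ)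
    (W : Finset (Finset X)) : ℝ :=
  ∑ k ∈ Finset.range (n + 1), fwt F n k * ((W.filter fun S => S.card = k).card : ℝ)

/-- If the simple game `(X, W)` with `|X| = n` is both proper and strong,
and `F` is an admissible rescaling satisfying
`F(n,k) − F(n,k+1) = F(n,n−k) − F(n,n+1−k)` for all `0 ≤ k ≤ n`, then `Q*_F(G) = 1/2`. -/
theorem statement7 {X : Type*} [Fintype X] [DecidableEq X] (n : ℕ)
    (hn : Fintype.card X = n) (W : Finset (Finset X)) (hW : ∅ ∉ W)
    (hproper : ∀ S ∈ W, Finset.univ \ S ∉ W)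
    (hstrong : ∀ S : Finset X, S ∉ W → Finset.univ \ S ∈ W)
    (F : ℕ → ℕ → ℝ) (hF : Admissible F)
    (hsym : ∀ k ≤ n, F n k - F n (k + 1) = F n (n - k) - F n (n + 1 - k)) :
    QstarF F n W = 1 / 2 := by
  classical
  set a : ℕ → ℝ := fun k => ((W.filter fun S => S.card = k).card : ℝ) with ha
  have hpc : ∀ m : ℕ, ((Finset.powersetCard m (Finset.univ : Finset X)).filter (· ∈ W)).card
      = (W.filter fun S => S.card = m).card := by
    intro m
    congr 1
    ext S
    simp [Finset.mem_powersetCard, and_comm]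
  have key : ∀ k, k ≤ n → a k + a (n - k) = (n.choose k : ℝ) := by
    intro k hk
    have hsplit : ((Finset.powersetCard k (Finset.univ : Finset X)).filter (· ∈ W)).card
        + ((Finset.powersetCard k (Finset.univ : Finset X)).filter (· ∉ W)).card
        = n.choose k := by
      rw [Finset.card_filter_add_card_filter_not, Finset.card_powersetCard,
        Finset.card_univ, hn]
    have hbij : ((Finset.powersetCard k (Finset.univ : Finset X)).filter (· ∉ W)).card
        = ((Finset.powersetCard (n - k) (Finset.univ : Finset X)).filter (· ∈ W)).card := by
      apply Finset.card_bij (fun S _ => Finset.univ \ S)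
      · intro S hS
        simp only [Finset.mem_filter, Finset.mem_powersetCard] at hS ⊢
        refine ⟨⟨Finset.sdiff_subset, ?_⟩, hstrong S hS.2⟩
        rw [Finset.card_sdiff_of_subset (Finset.subset_univ S), Finset.card_univ, hn, hS.1.2]
      · intro S hS T hT hST
        have := congrArg (fun A : Finset X => Finset.univ \ A) hST
        simpa [Finset.sdiff_sdiff_eq_self (Finset.subset_univ _)] using this
      · intro T hT
        simp only [Finset.mem_filter, Finset.mem_powersetCard] at hT
        refine ⟨Finset.univ \ T, ?_, ?_⟩
        · simp only [Finset.mem_filter, Finset.mem_powersetCard]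
          refine ⟨⟨Finset.sdiff_subset, ?_⟩, hproper T hT.2⟩
          rw [Finset.card_sdiff_of_subset (Finset.subset_univ T), Finset.card_univ, hn, hT.1.2]
          omega
        · simp [Finset.sdiff_sdiff_eq_self (Finset.subset_univ _)]
    have : (W.filter fun S => S.card = k).card
        + (W.filter fun S => S.card = (n - k)).card = n.choose k := by
      rw [← hpc k, ← hpc (n - k), ← hbij, hsplit]
    have := congrArg (fun m : ℕ => (m : ℝ)) this
    push_cast at this
    simpa [ha] using this
  have hd : ∀ k ≤ n, fwt F n (n - k) = fwt F n k := by
    intro k hk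
    unfold fwt
    rw [Nat.choose_symm hk]
    congr 1
    have h1 : n + 1 - k = (n - k) + 1 := by omega
    rw [← h1, ← hsym k hk]
  have hre : QstarF F n W = ∑ k ∈ Finset.range (n + 1), fwt F n k * a (n - k) := by
    unfold QstarF
    rw [← Finset.sum_range_reflect]
    apply Finset.sum_congr rfl
    intro k hk
    simp only [Finset.mem_range] at hk
    have h1 : n + 1 - 1 - k = n - k := by omega
    have h2 : n - (n - k) = k := by omega
    rw [h1, hd k (by omega)]
  have h2Q : QstarF F n W + QstarF F n W = 1 := by
    nth_rewrite 2 [hre]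
    unfold QstarF
    rw [← Finset.sum_add_distrib]
    have : ∀ k ∈ Finset.range (n + 1),
        fwt F n k * a k + fwt F n k * a (n - k) = F n k - F n (k + 1) := by
      intro k hk
      simp only [Finset.mem_range] at hk
      have hk' : k ≤ n := by omega
      rw [← mul_add, key k hk']
      unfold fwt
      have hc : (n.choose k : ℝ) ≠ 0 :=
        Nat.cast_ne_zero.mpr (Nat.choose_pos hk').ne'
      field_simp
    rw [Finset.sum_congr rfl this, Finset.sum_range_sub']
    rw [hF.2.1 n, hF.2.2 n (n + 1) (by omega)]
    ring
  linarith
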